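/- For every k ∈ ℤ∖{0} and m,n ∈ ℤ, the assignment g ↦ π_k^{m,n}(g) is a unitary representation of G̃ on functions on ℝ²: (i) π_k^{m,n}((0,0,0,0,0))f = f and π_k^{m,n}(g₁⋆g₂)f = π_k^{m,n}(g₁)(π_k^{m,n}(g₂)f) for all g₁,g₂ ∈ ℝ⁵ and all f : ℝ² → ℂ; (ii) for every g ∈ ℝ⁵ and every measurable f : ℝ² → ℂ, ∫_{ℝ²} |(π_k^{m,n}(g)f)(x,t)|² dx dt = ∫_{ℝ²} |f(x,t)|² dx dt (with both sides possibly +∞), so each π_k^{m,n}(g) preserves the L²(ℝ²) norm. -/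

import Mathlib

noncomputable section

open MeasureTheory

/-- The underlying set `ℝ⁵` of the group `G̃`. -/
abbrev G5 : Type := ℝ × ℝ × ℝ × ℝ × ℝ

/-- Multiplication on `G̃`. -/
def gtmul (g₁ g₂ : G5) : G5 :=
  (g₁.1 + g₂.1, g₁.2.1 + g₂.2.1, g₁.2.2.1 + g₂.2.2.1 - g₁.2.1 * g₂.1,
   g₁.2.2.2.1 + g₂.2.2.2.1,
   g₁.2.2.2.2 + g₂.2.2.2.2 + g₁.2.2.1 * g₂.1 - (1 / 2) * g₁.2.1 * g₂.1 ^ 2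
     + g₁.2.2.2.1 * g₂.2.1)

/-- The representation `π_k^{m,n}`: for `g = (a,b,c,r,v)`,
`(π_k^{m,n}(g)f)(x,t) = e^{−4πik(v+bt−c(x+a)−abx−(b/2)(x²+a²))}
  · e^{−2πi(mb−n(c+b(x+a)))} · f(x+a, t+r)`. -/
def pirep (k m n : ℤ) (g : G5) (f : ℝ × ℝ → ℂ) : ℝ × ℝ → ℂ := fun p =>
  Complex.exp (Complex.I *
      ((-4) * Real.pi * (k : ℝ) *
        (g.2.2.2.2 + g.2.1 * p.2 - g.2.2.1 * (p.1 + g.1) - g.1 * g.2.1 * p.1 -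
          (g.2.1 / 2) * (p.1 ^ 2 + g.1 ^ 2)) : ℝ)) *
    Complex.exp (Complex.I *
      ((-2) * Real.pi *
        ((m : ℝ) * g.2.1 - (n : ℝ) * (g.2.2.1 + g.2.1 * (p.1 + g.1))) : ℝ)) *
    f (p.1 + g.1, p.2 + g.2.2.2.1)

/-- `π_k^{m,n}` is a unitary representation of `G̃` on functions on `ℝ²`:
it sends the identity to the identity, intertwines `⋆` with composition,
and each `π_k^{m,n}(g)` preserves the `L²(ℝ²)` norm. -/
theorem stmt11 (k m n : ℤ) (hk : k ≠ 0) :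
    (∀ f : ℝ × ℝ → ℂ,
      pirep k m n ((0 : ℝ), (0 : ℝ), (0 : ℝ), (0 : ℝ), (0 : ℝ)) f = f) ∧
    (∀ g₁ g₂ : G5, ∀ f : ℝ × ℝ → ℂ,
      pirep k m n (gtmul g₁ g₂) f = pirep k m n g₁ (pirep k m n g₂ f)) ∧
    (∀ g : G5, ∀ f : ℝ × ℝ → ℂ, Measurable f →
      ∫⁻ p : ℝ × ℝ, (‖pirep k m n g f p‖₊ : ENNReal) ^ 2 =
        ∫⁻ p : ℝ × ℝ, (‖f p‖₊ : ENNReal) ^ 2) := by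
  refine ⟨?_, ?_, ?_⟩
  · intro f
    funext p
    simp [pirep]
  · intro g₁ g₂ f
    funext p
    simp only [pirep, gtmul]
    have h1 : (p.1 + (g₁.1 + g₂.1), p.2 + (g₁.2.2.2.1 + g₂.2.2.2.1)) =
        ((p.1 + g₁.1) + g₂.1, (p.2 + g₁.2.2.2.1) + g₂.2.2.2.1) := by
      simp [add_assoc]
    rw [h1]
    have key : ∀ (A B C D E F' F : ℂ), A + B = C + D + (E + F') →
        Complex.exp A * Complex.exp B * F =
          Complex.exp C * Complex.exp D * (Complex.exp E * Complex.exp F' * F) := by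
      intro A B C D E F' F h
      rw [← Complex.exp_add, ← Complex.exp_add, ← Complex.exp_add, ← mul_assoc,
        ← Complex.exp_add, h]
    apply key
    push_cast
    ring
  · intro g f hf
    have hpt : ∀ p : ℝ × ℝ,
        (‖pirep k m n g f p‖₊ : ENNReal) = ‖f (p + (g.1, g.2.2.2.1))‖₊ := by
      intro p
      have : pirep k m n g f p =
          Complex.exp (Complex.I *
            ((-4) * Real.pi * (k : ℝ) *
              (g.2.2.2.2 + g.2.1 * p.2 - g.2.2.1 * (p.1 + g.1) - g.1 * g.2.1 * p.1 -
                (g.2.1 / 2) * (p.1 ^ 2 + g.1 ^ 2)) : ℝ)) *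
          Complex.exp (Complex.I *
            ((-2) * Real.pi *
              ((m : ℝ) * g.2.1 - (n : ℝ) * (g.2.2.1 + g.2.1 * (p.1 + g.1))) : ℝ)) *
          f (p + (g.1, g.2.2.2.1)) := rfl
      rw [this]
      simp only [nnnorm_mul]
      have he : ∀ x : ℝ, ‖Complex.exp (Complex.I * (x : ℂ))‖₊ = 1 := by
        intro x
        ext
        simp [Complex.norm_exp]
      rw [he, he]
      push_cast
      ring
    simp only [hpt]
    have hmp : MeasurePreserving (fun p : ℝ × ℝ => p + (g.1, g.2.2.2.1))
        (volume : Measure (ℝ × ℝ)) volume := measurePreserving_add_right volume _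
    exact hmp.lintegral_comp (by
      exact ((hf.nnnorm.coe_nnreal_ennreal).pow_const 2))


end
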